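/- Let n ≥ 0 and 0 ≤ m ≤ n. The number of m-dimensional isotropic subspaces of V = 𝔽₂^{2n} equals binom(n,m)₂ · ∏_{i=n−m+1}^{n} (2^i + 1), where binom(n,m)₂ is the Gaussian binomial coefficient. -/

import Mathlib

/-- The field with two elements. -/
abbrev F2 := ZMod 2

/-- The phase space `V = 𝔽₂ⁿ × 𝔽₂ⁿ`. -/
abbrev V (n : ℕ) : Type := (Fin n → F2) × (Fin n → F2)

/-- The symplectic form `[a,b] = aₓ·b_z + a_z·bₓ` on `V n`. -/
def symp {n : ℕ} (a b : V n) : F2 :=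
  (∑ i, a.1 i * b.2 i) + (∑ i, a.2 i * b.1 i)

/-- A subspace is isotropic if the symplectic form vanishes on it. -/
def IsIsotropic {n : ℕ} (S : Submodule F2 (V n)) : Prop :=
  ∀ x ∈ S, ∀ y ∈ S, symp x y = 0

/-- Gaussian binomial coefficient `binom(m,r)₂`. -/
def gaussBinom (m r : ℕ) : ℚ :=
  ∏ i ∈ Finset.range r, ((2 ^ (m - i) - 1 : ℚ) / (2 ^ (r - i) - 1))

namespace IsoCount

open Module Finset

attribute [local instance] Classical.propDecidable

noncomputable section

instance finiteSubmodule (n : ℕ) : Finite (Submodule F2 (V n)) :=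
  Finite.of_injective (fun S => (S : Set (V n))) SetLike.coe_injective

noncomputable instance fintypeSubmodule (n : ℕ) : Fintype (Submodule F2 (V n)) :=
  Fintype.ofFinite _

/-- `symp` as a bilinear form. -/
def Bf (n : ℕ) : LinearMap.BilinForm F2 (V n) :=
  LinearMap.mk₂ F2 symp
    (fun a a' b => by
      simp [symp, add_mul, Finset.sum_add_distrib]; ring)
    (fun c a b => by
      simp only [symp, smul_eq_mul, Prod.smul_fst, Prod.smul_snd, Pi.smul_apply,
        Finset.mul_sum]
      rw [mul_add, Finset.mul_sum, Finset.mul_sum]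
      congr 1 <;> exact Finset.sum_congr rfl (fun i _ => by ring))
    (fun a b b' => by
      simp [symp, mul_add, Finset.sum_add_distrib]; ring)
    (fun c a b => by
      simp only [symp, smul_eq_mul, Prod.smul_fst, Prod.smul_snd, Pi.smul_apply,
        Finset.mul_sum]
      rw [mul_add, Finset.mul_sum, Finset.mul_sum]
      congr 1 <;> exact Finset.sum_congr rfl (fun i _ => by ring))

@[simp] lemma Bf_apply {n : ℕ} (a b : V n) : Bf n a b = symp a b := rfl

lemma symp_comm {n : ℕ} (a b : V n) : symp a b = symp b a := by
  simp only [symp]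
  rw [add_comm]
  congr 1 <;> exact Finset.sum_congr rfl fun i _ => mul_comm _ _

lemma Bf_refl {n : ℕ} : (Bf n).IsRefl := by
  intro a b h
  rw [Bf_apply, symp_comm b a]
  exact h

lemma symp_self {n : ℕ} (a : V n) : symp a a = 0 := by
  simp only [symp]
  have : (∑ i, a.2 i * a.1 i) = ∑ i, a.1 i * a.2 i :=
    Finset.sum_congr rfl fun i _ => mul_comm _ _
  rw [this, CharTwo.add_self_eq_zero]

lemma Bf_nondeg {n : ℕ} : (Bf n).Nondegenerate := by
  apply Bf_refl.nondegenerate_iff_separatingLeft.mpr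
  intro a h
  have h1 : ∀ i, a.1 i = 0 := by
    intro i
    have := h (0, Pi.single i 1)
    simpa [symp, Pi.single_apply, Finset.sum_ite_eq'] using this
  have h2 : ∀ i, a.2 i = 0 := by
    intro i
    have := h (Pi.single i 1, 0)
    simpa [symp, Pi.single_apply, Finset.sum_ite_eq'] using this
  ext i
  · exact h1 i
  · exact h2 i

lemma finrank_V (n : ℕ) : finrank F2 (V n) = 2 * n := by
  simp [Module.finrank_prod, two_mul]

lemma iso_le_orth {n : ℕ} {S : Submodule F2 (V n)} (hS : IsIsotropic S) :
    S ≤ (Bf n).orthogonal S := by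
  intro v hv x hx
  exact hS x hx v hv

lemma card_filter_mem {n : ℕ} (S : Submodule F2 (V n)) :
    (Finset.univ.filter (· ∈ S)).card = 2 ^ finrank F2 S := by
  classical
  rw [← Fintype.card_subtype]
  have : Fintype.card S = 2 ^ finrank F2 S := by
    have := card_eq_pow_finrank (K := F2) (V := S)
    rwa [ZMod.card] at this
  simpa using this

/-- The number of hyperplanes in a `(d+1)`-dimensional `F2`-vector space. -/
lemma card_hyperplanes (W : Type) [AddCommGroup W] [Module F2 W] [Module.Finite F2 W]
    (d : ℕ) (hd : finrank F2 W = d + 1) :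
    Nat.card {p : Submodule F2 W // finrank F2 p = d} = 2 ^ (d + 1) - 1 := by
  classical
  have hWfin : Finite W := Module.finite_of_finite F2
  have htwo : ∀ c : F2, c ≠ 0 → c = 1 := by decide
  -- the bijection φ ↦ ker φ from nonzero functionals to hyperplanes
  have hker : ∀ φ : Module.Dual F2 W, φ ≠ 0 → finrank F2 (LinearMap.ker φ) = d := by
    intro φ hφ
    have hr : LinearMap.range φ = ⊤ := by
      rcases eq_bot_or_eq_top (LinearMap.range φ) with h | h
      · exact absurd (LinearMap.range_eq_bot.mp h) hφ
      · exact h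
    have := LinearMap.finrank_range_add_finrank_ker φ
    rw [hr, hd] at this
    simp only [finrank_top, Module.finrank_self] at this
    omega
  set f : {φ : Module.Dual F2 W // φ ≠ 0} → {p : Submodule F2 W // finrank F2 p = d} :=
    fun φ => ⟨LinearMap.ker φ.1, hker φ.1 φ.2⟩ with hf
  have hbij : Function.Bijective f := by
    constructor
    · rintro ⟨φ, hφ⟩ ⟨ψ, hψ⟩ h
      have hk : LinearMap.ker φ = LinearMap.ker ψ := congrArg Subtype.val h
      ext x
      by_cases hx : φ x = 0
      · have : x ∈ LinearMap.ker ψ := hk ▸ (LinearMap.mem_ker.mpr hx)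
        rw [hx, LinearMap.mem_ker.mp this]
      · have hx' : ψ x ≠ 0 := by
          intro h0
          exact hx (LinearMap.mem_ker.mp (hk ▸ (LinearMap.mem_ker.mpr h0)))
        rw [htwo _ hx, htwo _ hx']
    · rintro ⟨p, hp⟩
      have hq : finrank F2 (W ⧸ p) = 1 := by
        have := Submodule.finrank_quotient_add_finrank p
        rw [hd, hp] at this
        omega
      let b : Basis (Fin 1) F2 (W ⧸ p) := Module.finBasisOfFinrankEq F2 (W ⧸ p) hq
      set φ : Module.Dual F2 W := (b.coord 0).comp p.mkQ with hφdef
      have hkerφ : LinearMap.ker φ = p := by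
        ext x
        simp only [LinearMap.mem_ker, hφdef, LinearMap.comp_apply]
        constructor
        · intro hx
          have h00 : b.repr (p.mkQ x) 0 = 0 := by
            simpa [Basis.coord_apply] using hx
          have hall : b.repr (p.mkQ x) = 0 :=
            Finsupp.ext (fun i => by
              have hi : i = 0 := Subsingleton.elim _ _
              rw [hi]; simpa using h00)
          have : p.mkQ x = 0 := (LinearEquiv.map_eq_zero_iff b.repr).mp hall
          simpa [Submodule.Quotient.mk_eq_zero] using this
        · intro hx
          have : p.mkQ x = 0 := by simpa [Submodule.Quotient.mk_eq_zero] using hx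
          simp [this]
      have hφne : φ ≠ 0 := by
        intro h0
        have hx := Submodule.mkQ_surjective p (b 0)
        rcases hx with ⟨x, hx⟩
        have : φ x = 1 := by
          simp [hφdef, hx, Basis.coord_apply]
        rw [h0] at this
        simp at this
      exact ⟨⟨φ, hφne⟩, Subtype.ext hkerφ⟩
  rw [← Nat.card_eq_of_bijective f hbij]
  -- count the nonzero functionals
  have : Finite (Module.Dual F2 W) := by
    exact Finite.of_injective (fun ψ => (ψ : W → F2)) DFunLike.coe_injective
  letI := Fintype.ofFinite (Module.Dual F2 W)
  letI : Fintype W := Fintype.ofFinite W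
  rw [Nat.card_eq_fintype_card]
  have h1 : Fintype.card {φ : Module.Dual F2 W // φ ≠ 0}
      = Fintype.card (Module.Dual F2 W) - 1 := by
    rw [Fintype.card_subtype_compl, Fintype.card_subtype_eq]
  have h2 : Fintype.card (Module.Dual F2 W) = 2 ^ (d + 1) := by
    have := card_eq_pow_finrank (K := F2) (V := Module.Dual F2 W)
    rw [ZMod.card, Subspace.dual_finrank_eq, hd] at this
    exact this
  rw [h1, h2]

/-- The number of `d`-dimensional subspaces below a `(d+1)`-dimensional subspace. -/
lemma card_sub_hyperplanes {n : ℕ} (T : Submodule F2 (V n)) (d : ℕ)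
    (hT : finrank F2 T = d + 1) :
    (Finset.univ.filter (fun S : Submodule F2 (V n) => S ≤ T ∧ finrank F2 S = d)).card
      = 2 ^ (d + 1) - 1 := by
  classical
  have h := card_hyperplanes T d hT
  rw [← Fintype.card_subtype]
  have e1 : {p : Submodule F2 T // finrank F2 p = d}
      ≃ {S : Submodule F2 (V n) // S ≤ T ∧ finrank F2 S = d} := by
    refine ((Submodule.MapSubtype.orderIso T).toEquiv.subtypeEquiv
      (q := fun x => finrank F2 x.1 = d) ?_).trans
      (Equiv.subtypeSubtypeEquivSubtypeInter (· ≤ T) (fun S => finrank F2 S = d))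
    intro p
    show finrank F2 p = d ↔ finrank F2 (Submodule.map T.subtype p) = d
    rw [Submodule.finrank_map_subtype_eq]
  calc Fintype.card {S : Submodule F2 (V n) // S ≤ T ∧ finrank F2 S = d}
      = Nat.card {S : Submodule F2 (V n) // S ≤ T ∧ finrank F2 S = d} :=
        Nat.card_eq_fintype_card.symm
    _ = Nat.card {p : Submodule F2 T // finrank F2 p = d} := (Nat.card_congr e1).symm
    _ = 2 ^ (d + 1) - 1 := h

lemma htwo : ∀ c : F2, c ≠ 0 → c = 1 := by decide

lemma card_between {n : ℕ} (S T : Submodule F2 (V n)) (hST : S ≤ T) :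
    (Finset.univ.filter (fun v : V n => v ∈ T ∧ v ∉ S)).card
      = 2 ^ finrank F2 T - 2 ^ finrank F2 S := by
  classical
  have hset : Finset.univ.filter (fun v : V n => v ∈ T ∧ v ∉ S)
      = Finset.univ.filter (· ∈ T) \ Finset.univ.filter (· ∈ S) := by
    ext v; simp
  rw [hset, Finset.card_sdiff_of_subset ?_, card_filter_mem, card_filter_mem]
  intro v hv
  simp only [Finset.mem_filter, Finset.mem_univ, true_and] at hv ⊢
  exact hST hv

lemma finrank_sup_span {n : ℕ} (S : Submodule F2 (V n)) (v : V n) (hv : v ∉ S) :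
    finrank F2 ((S ⊔ F2 ∙ v : Submodule F2 (V n)) : Submodule F2 (V n))
      = finrank F2 S + 1 := by
  have hv0 : v ≠ 0 := fun h => hv (h ▸ S.zero_mem)
  have hinf : S ⊓ (F2 ∙ v) = ⊥ := by
    rw [eq_bot_iff]
    rintro x ⟨hxS, hxv⟩
    rcases Submodule.mem_span_singleton.mp hxv with ⟨c, rfl⟩
    by_cases hc : c = 0
    · simp [hc]
    · rw [htwo c hc, one_smul] at hxS
      exact absurd hxS hv
  have := Submodule.finrank_sup_add_finrank_inf_eq S (F2 ∙ v)
  rw [hinf, finrank_bot, finrank_span_singleton hv0] at this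
  omega

lemma iso_sup {n : ℕ} {S : Submodule F2 (V n)} {v : V n} (hS : IsIsotropic S)
    (hv : v ∈ (Bf n).orthogonal S) : IsIsotropic (S ⊔ F2 ∙ v) := by
  intro x hx y hy
  rcases Submodule.mem_sup.mp hx with ⟨s, hs, z, hz, rfl⟩
  rcases Submodule.mem_span_singleton.mp hz with ⟨c, rfl⟩
  rcases Submodule.mem_sup.mp hy with ⟨t, ht, w, hw, rfl⟩
  rcases Submodule.mem_span_singleton.mp hw with ⟨d, rfl⟩
  have h1 : symp s t = 0 := hS s hs t ht
  have h2 : symp s v = 0 := hv s hs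
  have h3 : symp v t = 0 := by rw [symp_comm]; exact hv t ht
  have h4 : symp v v = 0 := symp_self v
  have : symp (s + c • v) (t + d • v) = Bf n (s + c • v) (t + d • v) := rfl
  rw [this]
  simp only [map_add, map_smul, LinearMap.add_apply, LinearMap.smul_apply,
    smul_eq_mul, Bf_apply, h1, h2, h3, h4]
  ring

def A (n m : ℕ) : Finset (Submodule F2 (V n)) :=
  Finset.univ.filter (fun S => IsIsotropic S ∧ finrank F2 S = m)

lemma key_recursion (n m : ℕ) (h : m < n) :
    (2 ^ (m + 1) - 1) * (A n (m + 1)).card = (2 ^ (2 * (n - m)) - 1) * (A n m).card := by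
  classical
  set Fl : Finset (Submodule F2 (V n) × Submodule F2 (V n)) :=
    Finset.univ.filter (fun p => IsIsotropic p.1 ∧ finrank F2 p.1 = m ∧
      IsIsotropic p.2 ∧ finrank F2 p.2 = m + 1 ∧ p.1 ≤ p.2) with hFl
  set G : Finset (Submodule F2 (V n) × V n) :=
    Finset.univ.filter (fun p => IsIsotropic p.1 ∧ finrank F2 p.1 = m ∧
      p.2 ∈ (Bf n).orthogonal p.1 ∧ p.2 ∉ p.1) with hG
  -- Step 1 : count flags by their top
  have h1 : Fl.card = (A n (m + 1)).card * (2 ^ (m + 1) - 1) := by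
    rw [Finset.card_eq_sum_card_fiberwise (f := Prod.snd) (t := A n (m + 1))
      (fun p hp => by
        simp only [hFl, Finset.mem_coe, Finset.mem_filter, Finset.mem_univ, true_and] at hp
        simp only [A, Finset.mem_coe, Finset.mem_filter, Finset.mem_univ, true_and]
        exact ⟨hp.2.2.1, hp.2.2.2.1⟩)]
    rw [Finset.sum_congr rfl (fun T hT => ?_), Finset.sum_const, smul_eq_mul]
    simp only [A, Finset.mem_filter, Finset.mem_univ, true_and] at hT
    have himg : Fl.filter (fun p => p.2 = T)
        = (Finset.univ.filter (fun S : Submodule F2 (V n) =>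
            S ≤ T ∧ finrank F2 S = m)).image (fun S => (S, T)) := by
      ext p
      simp only [hFl, Finset.mem_filter, Finset.mem_univ, true_and, Finset.mem_image]
      constructor
      · rintro ⟨⟨hi1, hr1, hi2, hr2, hle⟩, hsnd⟩
        exact ⟨p.1, ⟨hsnd ▸ hle, hr1⟩, by rw [← hsnd]⟩
      · rintro ⟨S, ⟨hle, hr⟩, rfl⟩
        exact ⟨⟨fun x hx y hy => hT.1 x (hle hx) y (hle hy), hr, hT.1, hT.2, hle⟩, rfl⟩
    rw [himg, Finset.card_image_of_injective _ (fun a b hab => congrArg Prod.fst hab),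
      card_sub_hyperplanes T m hT.2]
  -- Step 2 : count (S, v) pairs by S
  have h2 : G.card = (A n m).card * (2 ^ (2 * n - m) - 2 ^ m) := by
    rw [Finset.card_eq_sum_card_fiberwise (f := Prod.fst) (t := A n m)
      (fun p hp => by
        simp only [hG, Finset.mem_coe, Finset.mem_filter, Finset.mem_univ, true_and] at hp
        simp only [A, Finset.mem_coe, Finset.mem_filter, Finset.mem_univ, true_and]
        exact ⟨hp.1, hp.2.1⟩)]
    rw [Finset.sum_congr rfl (fun S hS => ?_), Finset.sum_const, smul_eq_mul]
    simp only [A, Finset.mem_filter, Finset.mem_univ, true_and] at hS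
    have himg : G.filter (fun p => p.1 = S)
        = (Finset.univ.filter (fun v : V n =>
            v ∈ (Bf n).orthogonal S ∧ v ∉ S)).image (fun v => (S, v)) := by
      ext p
      simp only [hG, Finset.mem_filter, Finset.mem_univ, true_and, Finset.mem_image]
      constructor
      · rintro ⟨⟨hi1, hr1, ho, hns⟩, hfst⟩
        exact ⟨p.2, ⟨hfst ▸ ho, hfst ▸ hns⟩, by rw [← hfst]⟩
      · rintro ⟨v, ⟨ho, hns⟩, rfl⟩
        exact ⟨⟨hS.1, hS.2, ho, hns⟩, rfl⟩
    rw [himg, Finset.card_image_of_injective _ (fun a b hab => congrArg Prod.snd hab),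
      card_between S ((Bf n).orthogonal S) (iso_le_orth hS.1),
      LinearMap.BilinForm.finrank_orthogonal Bf_nondeg S, finrank_V, hS.2]
  -- Step 3 : map (S, v) to the flag (S, S ⊔ span v)
  have h3 : G.card = Fl.card * 2 ^ m := by
    rw [Finset.card_eq_sum_card_fiberwise
      (f := fun p : Submodule F2 (V n) × V n => (p.1, p.1 ⊔ F2 ∙ p.2)) (t := Fl)
      (fun p hp => by
        simp only [hG, Finset.mem_coe, Finset.mem_filter, Finset.mem_univ, true_and] at hp
        obtain ⟨hi, hr, ho, hns⟩ := hp
        simp only [hFl, Finset.mem_coe, Finset.mem_filter, Finset.mem_univ, true_and]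
        exact ⟨hi, hr, iso_sup hi ho, by rw [finrank_sup_span p.1 p.2 hns, hr],
          le_sup_left⟩)]
    rw [Finset.sum_congr rfl (fun q hq => ?_), Finset.sum_const, smul_eq_mul]
    simp only [hFl, Finset.mem_filter, Finset.mem_univ, true_and] at hq
    obtain ⟨hi1, hr1, hi2, hr2, hle⟩ := hq
    have himg : G.filter (fun p => (p.1, p.1 ⊔ F2 ∙ p.2) = q)
        = (Finset.univ.filter (fun v : V n => v ∈ q.2 ∧ v ∉ q.1)).image
            (fun v => (q.1, v)) := by
      ext p
      simp only [hG, Finset.mem_filter, Finset.mem_univ, true_and, Finset.mem_image]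
      constructor
      · rintro ⟨⟨hi, hr, ho, hns⟩, heq⟩
        have e1 : p.1 = q.1 := congrArg Prod.fst heq
        have e2 : p.1 ⊔ (F2 ∙ p.2) = q.2 := congrArg Prod.snd heq
        refine ⟨p.2, ⟨?_, e1 ▸ hns⟩, ?_⟩
        · rw [← e2]
          exact (le_sup_right : (F2 ∙ p.2) ≤ p.1 ⊔ (F2 ∙ p.2)) (Submodule.mem_span_singleton_self p.2)
        · rw [← e1]
      · rintro ⟨v, ⟨hvT, hvS⟩, rfl⟩
        have ho : v ∈ (Bf n).orthogonal q.1 :=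
          (LinearMap.BilinForm.orthogonal_le hle) ((iso_le_orth hi2) hvT)
        refine ⟨⟨hi1, hr1, ho, hvS⟩, ?_⟩
        have hsup : q.1 ⊔ (F2 ∙ v) = q.2 := by
          apply Submodule.eq_of_le_of_finrank_eq
          · exact sup_le hle ((Submodule.span_singleton_le_iff_mem v q.2).mpr hvT)
          · rw [finrank_sup_span q.1 v hvS, hr1, hr2]
        rw [hsup]
    rw [himg, Finset.card_image_of_injective _ (fun a b hab => congrArg Prod.snd hab),
      card_between q.1 q.2 hle, hr1, hr2]
    have : 2 ^ (m + 1) - 2 ^ m = 2 ^ m := by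
      rw [pow_succ]; omega
    rw [this]
  -- arithmetic
  have hsplit : 2 ^ (2 * n - m) - 2 ^ m = 2 ^ m * (2 ^ (2 * (n - m)) - 1) := by
    have hexp : 2 * n - m = m + 2 * (n - m) := by omega
    rw [hexp, pow_add, ← Nat.pred_eq_sub_one, Nat.mul_pred]
  have hmain : 2 ^ m * ((2 ^ (m + 1) - 1) * (A n (m + 1)).card)
      = 2 ^ m * ((2 ^ (2 * (n - m)) - 1) * (A n m).card) := by
    calc 2 ^ m * ((2 ^ (m + 1) - 1) * (A n (m + 1)).card)
        = Fl.card * 2 ^ m := by rw [h1]; ring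
      _ = G.card := h3.symm
      _ = (A n m).card * (2 ^ m * (2 ^ (2 * (n - m)) - 1)) := by rw [h2, hsplit]
      _ = 2 ^ m * ((2 ^ (2 * (n - m)) - 1) * (A n m).card) := by ring
  exact Nat.eq_of_mul_eq_mul_left (pow_pos (by norm_num) m) hmain

lemma card_A_zero (n : ℕ) : (A n 0).card = 1 := by
  classical
  have : A n 0 = {⊥} := by
    ext S
    simp only [A, Finset.mem_filter, Finset.mem_univ, true_and, Finset.mem_singleton]
    constructor
    · rintro ⟨hi, hr⟩
      exact Submodule.finrank_eq_zero.mp hr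
    · rintro rfl
      refine ⟨?_, finrank_bot F2 (V n)⟩
      intro x hx y hy
      rw [Submodule.mem_bot] at hx
      rw [hx]
      have : symp (0 : V n) y = Bf n 0 y := rfl
      rw [this, map_zero, LinearMap.zero_apply]
  rw [this, Finset.card_singleton]

lemma two_pow_gt_one (k : ℕ) (hk : 1 ≤ k) : (1 : ℚ) < 2 ^ k := by
  calc (1 : ℚ) < 2 := by norm_num
    _ ≤ 2 ^ k := le_self_pow₀ (by norm_num) (by omega)

lemma Qprod_ne (m : ℕ) : (∏ i ∈ Finset.range m, ((2 : ℚ) ^ (i + 1) - 1)) ≠ 0 := by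
  rw [Finset.prod_ne_zero_iff]
  intro i _
  exact sub_ne_zero.mpr (ne_of_gt (two_pow_gt_one (i + 1) (by omega)))

lemma gauss_eq (n r : ℕ) : gaussBinom n r
    = (∏ i ∈ Finset.range r, ((2 : ℚ) ^ (n - i) - 1))
      / (∏ i ∈ Finset.range r, ((2 : ℚ) ^ (i + 1) - 1)) := by
  rw [gaussBinom, Finset.prod_div_distrib]
  congr 1
  rw [← Finset.prod_range_reflect (fun j => (2 : ℚ) ^ (j + 1) - 1) r]
  apply Finset.prod_congr rfl
  intro j hj
  rw [Finset.mem_range] at hj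
  congr 2
  omega

lemma R_succ (n m : ℕ) (h : m < n) :
    (∏ i ∈ Finset.Icc (n - (m + 1) + 1) n, ((2 : ℚ) ^ i + 1))
      = ((2 : ℚ) ^ (n - m) + 1) * ∏ i ∈ Finset.Icc (n - m + 1) n, ((2 : ℚ) ^ i + 1) := by
  have h1 : n - (m + 1) + 1 = n - m := by omega
  have h2 : n - m ≤ n := Nat.sub_le n m
  have h3 : Finset.Icc (n - m + 1) n = Finset.Ioc (n - m) n := by
    ext x; simp [Finset.mem_Icc, Finset.mem_Ioc]
  rw [h1, h3, ← Finset.prod_insert (f := fun i => (2 : ℚ) ^ i + 1) (a := n - m)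
    (s := Finset.Ioc (n - m) n) Finset.left_notMem_Ioc, Finset.Ioc_insert_left h2]

lemma natcard_eq_A (n m : ℕ) :
    Nat.card {S : Submodule F2 (V n) // IsIsotropic S ∧ finrank F2 S = m} = (A n m).card := by
  rw [Nat.card_eq_fintype_card, Fintype.card_subtype]
  rfl

end

end IsoCount

/-- The number of `m`-dimensional isotropic subspaces of `V = 𝔽₂^{2n}` equals
`binom(n,m)₂ · ∏_{i=n−m+1}^{n} (2^i + 1)`. -/
theorem stmt0 (n m : ℕ) (hm : m ≤ n) :
    (Nat.card {S : Submodule F2 (V n) // IsIsotropic S ∧ Module.finrank F2 S = m} : ℚ)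
      = gaussBinom n m * ∏ i ∈ Finset.Icc (n - m + 1) n, ((2 : ℚ) ^ i + 1) := by
  revert hm
  induction m with
  | zero =>
    intro _
    rw [IsoCount.natcard_eq_A, IsoCount.card_A_zero]
    have he : Finset.Icc (n - 0 + 1) n = ∅ := Finset.Icc_eq_empty (by omega)
    simp [gaussBinom, he]
  | succ m ih =>
    intro hm1
    have hlt : m < n := hm1
    have ihe := ih (le_of_lt hlt)
    rw [IsoCount.natcard_eq_A] at ihe ⊢
    have hrec := IsoCount.key_recursion n m hlt
    have hc := congrArg (Nat.cast : ℕ → ℚ) hrec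
    rw [Nat.cast_mul, Nat.cast_mul, Nat.cast_sub (Nat.one_le_pow _ 2 (by norm_num)),
      Nat.cast_sub (Nat.one_le_pow _ 2 (by norm_num)), Nat.cast_pow, Nat.cast_pow,
      Nat.cast_one, Nat.cast_ofNat] at hc
    have hne : ((2 : ℚ) ^ (m + 1) - 1) ≠ 0 :=
      sub_ne_zero.mpr (ne_of_gt (IsoCount.two_pow_gt_one (m + 1) (by omega)))
    refine mul_left_cancel₀ hne ?_
    rw [hc, ihe, IsoCount.gauss_eq, IsoCount.gauss_eq, IsoCount.R_succ n m hlt,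
      Finset.prod_range_succ ,
      Finset.prod_range_succ (fun i => (2 : ℚ) ^ (i + 1) - 1)]
    have hpow : (2 : ℚ) ^ (2 * (n - m)) = 2 ^ (n - m) * 2 ^ (n - m) := by
      rw [two_mul, pow_add]
    have hQ := IsoCount.Qprod_ne m
    field_simp
    rw [hpow]
    ring
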